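/- arXiv:2304.07657 — 3 statements merged into one kernel-verified Lean document; each statement's English description precedes it below -/
import Mathlib

section
/- There are exactly 41 vacillating tableaux of length 5 from the partition (3) to the partition (3); equivalently, m^{(3)}_{(3)}(5) = S(5,1) + S(5,2) + S(5,3) = 1 + 15 + 25 = 41. -/
open YoungDiagram

/-- `ν` is obtained from `μ` by adding exactly one cell. -/
def AddCell (μ ν : YoungDiagram) : Prop := μ ≤ ν ∧ ν.card = μ.card + 1

/-- Vacillating tableaux of length `k` from `lam` to `mu`: sequences
`lam = λ⁰ ⊃ λ¹ ⊂ λ² ⊃ ⋯ ⊂ λ^{2k} = mu` with consecutive terms differing by one cell,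
encoded as functions `ℕ → YoungDiagram` that are constantly `mu` from index `2k` on. -/
def vacTabs (k : ℕ) (lam mu : YoungDiagram) : Set (ℕ → YoungDiagram) :=
  {f | f 0 = lam ∧ (∀ j, 2 * k ≤ j → f j = mu) ∧
    ∀ i < k, AddCell (f (2 * i + 1)) (f (2 * i)) ∧ AddCell (f (2 * i + 1)) (f (2 * i + 2))}

/-- `m^lam_mu(k)`: the number of vacillating tableaux of length `k` from `lam` to `mu`. -/
noncomputable def mVac (lam mu : YoungDiagram) (k : ℕ) : ℕ := (vacTabs k lam mu).ncard

/-- Standard Young tableaux of shape `lam`, as saturated chains `∅ = ν⁰ ⊂ ν¹ ⊂ ⋯ ⊂ νⁿ = lam`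
adding one cell at a time (encoded as functions constantly `lam` from index `lam.card` on). -/
def sytChains (lam : YoungDiagram) : Set (ℕ → YoungDiagram) :=
  {g | g 0 = ⊥ ∧ (∀ j, lam.card ≤ j → g j = lam) ∧
    ∀ i < lam.card, AddCell (g i) (g (i + 1))}

/-- `f^lam`: the number of standard Young tableaux of shape `lam`. -/
noncomputable def fSYT (lam : YoungDiagram) : ℕ := (sytChains lam).ncard

/-- The one-row partition `(n)`. -/
def rowD (n : ℕ) : YoungDiagram := ofRowLens [n] (List.Pairwise.sortedGE (List.pairwise_singleton _ n))

/-- The one-column partition `(1ⁿ)`. -/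
def colD (n : ℕ) : YoungDiagram :=
  ofRowLens (List.replicate n 1) (List.Pairwise.sortedGE (List.pairwise_replicate.mpr (Or.inr (le_refl 1))))

/-- The hook partition `(n-1,1)` (for `n ≥ 2`). -/
def hookD (n : ℕ) : YoungDiagram := rowD (n - 1) ⊔ colD 2

/-- Stirling numbers of the second kind: the number of set partitions of a
`k`-element set into exactly `l` nonempty blocks. -/
noncomputable def stirling (k l : ℕ) : ℕ :=
  {P : Finpartition (Finset.univ : Finset (Fin k)) | P.parts.card = l}.ncard

/-- Bell numbers: the number of set partitions of a `k`-element set. -/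
noncomputable def bell (k : ℕ) : ℕ :=
  Nat.card (Finpartition (Finset.univ : Finset (Fin k)))

set_option maxRecDepth 40000
set_option maxHeartbeats 1000000

section Aux
open Finset

instance : DecidableEq YoungDiagram := fun μ ν => decidable_of_iff _ YoungDiagram.ext_iff.symm

lemma cell_bound (μ : YoungDiagram) {i j : ℕ} (h : (i, j) ∈ μ.cells) :
    i < μ.card ∧ j < μ.card := by
  constructor
  · have : (Finset.range (i + 1)).card ≤ μ.cells.card := by
      apply Finset.card_le_card_of_injOn (fun k => (k, j))
      · intro k hk
        exact μ.up_left_mem (Nat.lt_succ_iff.mp (Finset.mem_range.mp hk)) (le_refl j) h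
      · intro a _ b _ hab; simpa using hab
    simpa using this
  · have : (Finset.range (j + 1)).card ≤ μ.cells.card := by
      apply Finset.card_le_card_of_injOn (fun k => (i, k))
      · intro k hk
        exact μ.up_left_mem (le_refl i) (Nat.lt_succ_iff.mp (Finset.mem_range.mp hk)) h
      · intro a _ b _ hab; simpa using hab
    simpa using this

lemma class2 (μ : YoungDiagram) (h : μ.card = 2) : μ = rowD 2 ∨ μ = colD 2 := by
  have hsub : μ.cells ⊆ Finset.range 3 ×ˢ Finset.range 3 := by
    rintro ⟨i, j⟩ hc
    have hb := cell_bound μ hc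
    rw [h] at hb
    simp only [Finset.mem_product, Finset.mem_range]
    omega
  have hlow : ∀ c ∈ μ.cells, ∀ c' ∈ Finset.range 3 ×ˢ Finset.range 3, c' ≤ c → c' ∈ μ.cells :=
    fun c hc c' _ hle => μ.isLowerSet hle hc
  have key : ∀ t ∈ (Finset.range 3 ×ˢ Finset.range 3).powerset, t.card = 2 →
      (∀ c ∈ t, ∀ c' ∈ Finset.range 3 ×ˢ Finset.range 3, c' ≤ c → c' ∈ t) →
      t = (rowD 2).cells ∨ t = (colD 2).cells := by decide
  rcases key μ.cells (Finset.mem_powerset.mpr hsub) h hlow with h1 | h1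
  · exact Or.inl (YoungDiagram.ext_iff.mpr h1)
  · exact Or.inr (YoungDiagram.ext_iff.mpr h1)

lemma class3 (μ : YoungDiagram) (h : μ.card = 3) :
    μ = rowD 3 ∨ μ = hookD 3 ∨ μ = colD 3 := by
  have hsub : μ.cells ⊆ Finset.range 3 ×ˢ Finset.range 3 := by
    rintro ⟨i, j⟩ hc
    have hb := cell_bound μ hc
    rw [h] at hb
    simp only [Finset.mem_product, Finset.mem_range]
    omega
  have hlow : ∀ c ∈ μ.cells, ∀ c' ∈ Finset.range 3 ×ˢ Finset.range 3, c' ≤ c → c' ∈ μ.cells :=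
    fun c hc c' _ hle => μ.isLowerSet hle hc
  have key : ∀ t ∈ (Finset.range 3 ×ˢ Finset.range 3).powerset, t.card = 3 →
      (∀ c ∈ t, ∀ c' ∈ Finset.range 3 ×ˢ Finset.range 3, c' ≤ c → c' ∈ t) →
      t = (rowD 3).cells ∨ t = (hookD 3).cells ∨ t = (colD 3).cells := by decide
  rcases key μ.cells (Finset.mem_powerset.mpr hsub) h hlow with h1 | h1 | h1
  · exact Or.inl (YoungDiagram.ext_iff.mpr h1)
  · exact Or.inr (Or.inl (YoungDiagram.ext_iff.mpr h1))
  · exact Or.inr (Or.inr (YoungDiagram.ext_iff.mpr h1))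

instance : ∀ μ ν : YoungDiagram, Decidable (AddCell μ ν) := fun μ ν =>
  decidable_of_iff (μ.cells ⊆ ν.cells ∧ ν.card = μ.card + 1)
    (by unfold AddCell; rw [cells_subset_iff])
def d2 : Fin 2 → YoungDiagram := ![rowD 2, colD 2]
def d3 : Fin 3 → YoungDiagram := ![rowD 3, hookD 3, colD 3]
def edge (a : Fin 2) (b : Fin 3) : Prop := AddCell (d2 a) (d3 b)
instance (a b) : Decidable (edge a b) := by unfold edge; infer_instance
abbrev W := (Fin 2 × Fin 3) × (Fin 2 × Fin 3) × (Fin 2 × Fin 3) × (Fin 2 × Fin 3) × Fin 2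
def wlist (w : W) : List YoungDiagram :=
  [rowD 3, d2 w.1.1, d3 w.1.2, d2 w.2.1.1, d3 w.2.1.2, d2 w.2.2.1.1, d3 w.2.2.1.2,
   d2 w.2.2.2.1.1, d3 w.2.2.2.1.2, d2 w.2.2.2.2, rowD 3]
def θ (w : W) : ℕ → YoungDiagram := fun n => (wlist w).getD n (rowD 3)
def wcond (w : W) : Prop :=
  edge w.1.1 0 ∧ edge w.1.1 w.1.2 ∧ edge w.2.1.1 w.1.2 ∧ edge w.2.1.1 w.2.1.2 ∧
  edge w.2.2.1.1 w.2.1.2 ∧ edge w.2.2.1.1 w.2.2.1.2 ∧ edge w.2.2.2.1.1 w.2.2.1.2 ∧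
  edge w.2.2.2.1.1 w.2.2.2.1.2 ∧ edge w.2.2.2.2 w.2.2.2.1.2 ∧ edge w.2.2.2.2 0
instance (w : W) : Decidable (wcond w) := by unfold wcond; infer_instance

noncomputable def e2 (μ : YoungDiagram) : Fin 2 := if μ = rowD 2 then 0 else 1
noncomputable def e3 (μ : YoungDiagram) : Fin 3 :=
  if μ = rowD 3 then 0 else if μ = hookD 3 then 1 else 2


lemma d2_e2 {μ : YoungDiagram} (h : μ.card = 2) : d2 (e2 μ) = μ := by
  rcases class2 μ h with rfl | rfl
  · simp [e2]; rfl
  · rw [e2, if_neg (by decide)]; rfl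

lemma d3_e3 {μ : YoungDiagram} (h : μ.card = 3) : d3 (e3 μ) = μ := by
  rcases class3 μ h with rfl | rfl | rfl
  · simp [e3]; rfl
  · rw [e3, if_neg (by decide), if_pos rfl]; rfl
  · rw [e3, if_neg (by decide), if_neg (by decide)]; rfl

lemma edge_of {μ ν : YoungDiagram} (h2 : μ.card = 2) (h3 : ν.card = 3)
    (h : AddCell μ ν) : edge (e2 μ) (e3 ν) := by
  show AddCell (d2 (e2 μ)) (d3 (e3 ν))
  rw [d2_e2 h2, d3_e3 h3]; exact h

lemma e3_row : e3 (rowD 3) = 0 := by simp [e3]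

lemma mem_of_wcond {w : W} (hw : wcond w) : θ w ∈ vacTabs 5 (rowD 3) (rowD 3) := by
  obtain ⟨e1, e2', e3', e4, e5, e6, e7, e8, e9, e10⟩ := hw
  refine ⟨rfl, ?_, ?_⟩
  · intro j hj
    rcases Nat.lt_or_ge j 11 with h | h
    · have : j = 10 := by omega
      subst this; rfl
    · exact List.getD_eq_default _ _ (by simp [wlist]; omega)
  · intro i hi
    interval_cases i
    · exact ⟨e1, e2'⟩
    · exact ⟨e3', e4⟩
    · exact ⟨e5, e6⟩
    · exact ⟨e7, e8⟩
    · exact ⟨e9, e10⟩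

lemma exists_w {f : ℕ → YoungDiagram} (hf : f ∈ vacTabs 5 (rowD 3) (rowD 3)) :
    ∃ w, wcond w ∧ θ w = f := by
  obtain ⟨h0, h10, hstep⟩ := hf
  have s0 := hstep 0 (by norm_num)
  have s1 := hstep 1 (by norm_num)
  have s2 := hstep 2 (by norm_num)
  have s3 := hstep 3 (by norm_num)
  have s4 := hstep 4 (by norm_num)
  norm_num at s0 s1 s2 s3 s4
  have hten : f 10 = rowD 3 := h10 10 (by norm_num)
  have c0 : (f 0).card = 3 := by rw [h0]; decide
  have c1 : (f 1).card = 2 := by have := s0.1.2; omega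
  have c2 : (f 2).card = 3 := by have := s0.2.2; omega
  have c3 : (f 3).card = 2 := by have := s1.1.2; omega
  have c4 : (f 4).card = 3 := by have := s1.2.2; omega
  have c5 : (f 5).card = 2 := by have := s2.1.2; omega
  have c6 : (f 6).card = 3 := by have := s2.2.2; omega
  have c7 : (f 7).card = 2 := by have := s3.1.2; omega
  have c8 : (f 8).card = 3 := by have := s3.2.2; omega
  have c9 : (f 9).card = 2 := by have := s4.1.2; omega
  have c10 : (f 10).card = 3 := by rw [hten]; decide
  have z0 : (0 : Fin 3) = e3 (f 0) := by rw [h0, e3_row]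
  have z10 : (0 : Fin 3) = e3 (f 10) := by rw [hten, e3_row]
  refine ⟨((e2 (f 1), e3 (f 2)), (e2 (f 3), e3 (f 4)), (e2 (f 5), e3 (f 6)),
      (e2 (f 7), e3 (f 8)), e2 (f 9)), ⟨?_, ?_, ?_, ?_, ?_, ?_, ?_, ?_, ?_, ?_⟩, ?_⟩
  · rw [z0]; exact edge_of c1 c0 s0.1
  · exact edge_of c1 c2 s0.2
  · exact edge_of c3 c2 s1.1
  · exact edge_of c3 c4 s1.2
  · exact edge_of c5 c4 s2.1
  · exact edge_of c5 c6 s2.2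
  · exact edge_of c7 c6 s3.1
  · exact edge_of c7 c8 s3.2
  · exact edge_of c9 c8 s4.1
  · rw [z10]; exact edge_of c9 c10 s4.2
  · funext n
    rcases Nat.lt_or_ge n 10 with hn | hn
    · interval_cases n
      · exact h0.symm
      · exact d2_e2 c1
      · exact d3_e3 c2
      · exact d2_e2 c3
      · exact d3_e3 c4
      · exact d2_e2 c5
      · exact d3_e3 c6
      · exact d2_e2 c7
      · exact d3_e3 c8
      · exact d2_e2 c9
    · rw [h10 n hn]
      rcases Nat.lt_or_ge n 11 with h | h
      · have : n = 10 := by omega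
        subst this; rfl
      · exact List.getD_eq_default _ _ (by simp [wlist]; omega)

lemma e2d2 : ∀ a, e2 (d2 a) = a := by decide
lemma e3d3 : ∀ b, e3 (d3 b) = b := by decide

lemma theta_inj : Function.Injective θ := by
  rintro ⟨⟨a1, b1⟩, ⟨a2, b2⟩, ⟨a3, b3⟩, ⟨a4, b4⟩, a5⟩
    ⟨⟨a1', b1'⟩, ⟨a2', b2'⟩, ⟨a3', b3'⟩, ⟨a4', b4'⟩, a5'⟩ h
  have g : ∀ n, (wlist (((a1, b1), (a2, b2), (a3, b3), (a4, b4), a5) : W)).getD n (rowD 3) =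
      (wlist (((a1', b1'), (a2', b2'), (a3', b3'), (a4', b4'), a5') : W)).getD n (rowD 3) :=
    fun n => congrFun h n
  have h1 : a1 = a1' := by have := congrArg e2 (g 1); simpa [wlist, List.getD, e2d2, e3d3] using this
  have h2 : b1 = b1' := by have := congrArg e3 (g 2); simpa [wlist, List.getD, e2d2, e3d3] using this
  have h3 : a2 = a2' := by have := congrArg e2 (g 3); simpa [wlist, List.getD, e2d2, e3d3] using this
  have h4 : b2 = b2' := by have := congrArg e3 (g 4); simpa [wlist, List.getD, e2d2, e3d3] using this
  have h5 : a3 = a3' := by have := congrArg e2 (g 5); simpa [wlist, List.getD, e2d2, e3d3] using this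
  have h6 : b3 = b3' := by have := congrArg e3 (g 6); simpa [wlist, List.getD, e2d2, e3d3] using this
  have h7 : a4 = a4' := by have := congrArg e2 (g 7); simpa [wlist, List.getD, e2d2, e3d3] using this
  have h8 : b4 = b4' := by have := congrArg e3 (g 8); simpa [wlist, List.getD, e2d2, e3d3] using this
  have h9 : a5 = a5' := by have := congrArg e2 (g 9); simpa [wlist, List.getD, e2d2, e3d3] using this
  subst h1 h2 h3 h4 h5 h6 h7 h8 h9
  rfl

def edgeB (a : Fin 2) (b : Fin 3) : Prop := (a = 0 ∧ b ≠ 2) ∨ (a = 1 ∧ b ≠ 0)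
instance (a b) : Decidable (edgeB a b) := by unfold edgeB; infer_instance
lemma edge_iff : ∀ a b, edge a b ↔ edgeB a b := by decide

lemma count41 : ((Finset.univ : Finset W).filter wcond).card = 41 := by
  have : (Finset.univ : Finset W).filter wcond = Finset.univ.filter (fun w =>
      edgeB w.1.1 0 ∧ edgeB w.1.1 w.1.2 ∧ edgeB w.2.1.1 w.1.2 ∧ edgeB w.2.1.1 w.2.1.2 ∧
      edgeB w.2.2.1.1 w.2.1.2 ∧ edgeB w.2.2.1.1 w.2.2.1.2 ∧ edgeB w.2.2.2.1.1 w.2.2.1.2 ∧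
      edgeB w.2.2.2.1.1 w.2.2.2.1.2 ∧ edgeB w.2.2.2.2 w.2.2.2.1.2 ∧ edgeB w.2.2.2.2 0) := by
    apply Finset.filter_congr
    intro w _
    unfold wcond
    simp only [edge_iff]
  rw [this]
  decide

lemma mVac41 : mVac (rowD 3) (rowD 3) 5 = 41 := by
  have himg : vacTabs 5 (rowD 3) (rowD 3) = θ '' {w | wcond w} := by
    ext f
    constructor
    · intro hf
      obtain ⟨w, hw, hwf⟩ := exists_w hf
      exact ⟨w, hw, hwf⟩
    · rintro ⟨w, hw, rfl⟩
      exact mem_of_wcond hw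
  rw [mVac, himg, Set.ncard_image_of_injective _ theta_inj]
  have : {w : W | wcond w} = ↑((Finset.univ : Finset W).filter wcond) := by
    ext w; simp
  rw [this, Set.ncard_coe_finset, count41]

noncomputable def Phi (P : Finpartition (Finset.univ : Finset (Fin 5))) : Fin 5 → Fin 5 :=
  fun a => (P.part a).min' ⟨a, P.mem_part (mem_univ a)⟩

lemma Phi_mem (P : Finpartition (Finset.univ : Finset (Fin 5))) (a : Fin 5) :
    Phi P a ∈ P.part a := Finset.min'_mem _ _

lemma Phi_le (P : Finpartition (Finset.univ : Finset (Fin 5))) (a : Fin 5) :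
    Phi P a ≤ a := Finset.min'_le _ _ (P.mem_part (mem_univ a))

lemma part_Phi (P : Finpartition (Finset.univ : Finset (Fin 5))) (a : Fin 5) :
    P.part (Phi P a) = P.part a := P.part_eq_of_mem (P.part_mem.2 (mem_univ a)) (Phi_mem P a)

lemma Phi_idem (P : Finpartition (Finset.univ : Finset (Fin 5))) (a : Fin 5) :
    Phi P (Phi P a) = Phi P a := by
  have h := part_Phi P a
  unfold Phi at h ⊢
  simp only [h]

lemma Phi_eq_iff (P : Finpartition (Finset.univ : Finset (Fin 5))) (a b : Fin 5) :
    Phi P a = Phi P b ↔ P.part a = P.part b := by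
  constructor
  · intro h
    refine P.eq_of_mem_parts (P.part_mem.2 (mem_univ a)) (P.part_mem.2 (mem_univ b)) (Phi_mem P a) ?_
    rw [h]; exact Phi_mem P b
  · intro h
    simp only [Phi, h]

lemma card_parts_eq (P : Finpartition (Finset.univ : Finset (Fin 5))) :
    P.parts.card = (Finset.univ.image (Phi P)).card := by
  apply Finset.card_bij (fun p hp => p.min' (P.nonempty_of_mem_parts hp))
  · intro p hp
    obtain ⟨x, -, hx⟩ := P.part_surjOn hp
    subst hx
    exact mem_image.mpr ⟨x, mem_univ x, rfl⟩
  · intro p hp q hq h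
    have h1 : p.min' (P.nonempty_of_mem_parts hp) ∈ p := Finset.min'_mem _ _
    have h2 : p.min' (P.nonempty_of_mem_parts hp) ∈ q := by rw [h]; exact Finset.min'_mem _ _
    exact P.eq_of_mem_parts hp hq h1 h2
  · intro v hv
    obtain ⟨a, -, rfl⟩ := mem_image.mp hv
    exact ⟨P.part a, P.part_mem.2 (mem_univ a), rfl⟩

lemma Phi_inj : Function.Injective Phi := by
  intro P Q h
  have hpart : ∀ a, P.part a = Q.part a := by
    intro a
    ext b
    rw [show (b ∈ P.part a) ↔ P.part b = P.part a from
        P.mem_part_iff_part_eq_part (mem_univ b) (mem_univ a),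
      show (b ∈ Q.part a) ↔ Q.part b = Q.part a from
        Q.mem_part_iff_part_eq_part (mem_univ b) (mem_univ a),
      ← Phi_eq_iff, ← Phi_eq_iff, h]
  ext p
  constructor
  · intro hp
    obtain ⟨x, -, rfl⟩ := P.part_surjOn hp
    rw [hpart]; exact Q.part_mem.2 (mem_univ x)
  · intro hp
    obtain ⟨x, -, rfl⟩ := Q.part_surjOn hp
    rw [← hpart]; exact P.part_mem.2 (mem_univ x)

def kerS (g : Fin 5 → Fin 5) : Setoid (Fin 5) :=
  ⟨fun a b => g a = g b, ⟨fun _ => rfl, Eq.symm, Eq.trans⟩⟩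

instance (g : Fin 5 → Fin 5) : DecidableRel (kerS g).r :=
  fun a b => inferInstanceAs (Decidable (g a = g b))

lemma Phi_ofSetoid {g : Fin 5 → Fin 5} (hg : ∀ x, g (g x) = g x ∧ g x ≤ x) :
    Phi (Finpartition.ofSetoid (kerS g)) = g := by
  funext a
  apply le_antisymm
  · apply Finset.min'_le
    rw [Finpartition.mem_part_ofSetoid_iff_rel]
    exact (hg a).1.symm
  · apply Finset.le_min'
    intro b hb
    rw [Finpartition.mem_part_ofSetoid_iff_rel] at hb
    calc g a = g b := hb
    _ ≤ b := (hg b).2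

lemma stirling_eq (l : ℕ) : stirling 5 l =
    ((Finset.univ : Finset (Fin 5 → Fin 5)).filter
      (fun g => (∀ x, g (g x) = g x ∧ g x ≤ x) ∧ (Finset.univ.image g).card = l)).card := by
  rw [stirling, ← Set.ncard_image_of_injective _ Phi_inj, ← Set.ncard_coe_finset]
  congr 1
  ext g
  simp only [Set.mem_image, Set.mem_setOf_eq, coe_filter, mem_univ, true_and]
  constructor
  · rintro ⟨P, hP, rfl⟩
    exact ⟨fun x => ⟨Phi_idem P x, Phi_le P x⟩, by rw [← card_parts_eq]; exact hP⟩
  · rintro ⟨hg, hcard⟩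
    refine ⟨Finpartition.ofSetoid (kerS g), ?_, Phi_ofSetoid hg⟩
    rw [card_parts_eq, Phi_ofSetoid hg, hcard]

lemma st1 : stirling 5 1 = 1 := by rw [stirling_eq]; decide
lemma st2 : stirling 5 2 = 15 := by rw [stirling_eq]; decide
lemma st3 : stirling 5 3 = 25 := by rw [stirling_eq]; decide

end Aux

theorem stmt8 :
    mVac (rowD 3) (rowD 3) 5 = 41 ∧
      stirling 5 1 + stirling 5 2 + stirling 5 3 = 41 ∧
        stirling 5 1 = 1 ∧ stirling 5 2 = 15 ∧ stirling 5 3 = 25 := by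
  refine ⟨mVac41, ?_, st1, st2, st3⟩
  rw [st1, st2, st3]
end

section
/- For every positive integer n and nonnegative integer k, the number of pairs (T, V), where T is a standard Young tableau of some shape λ with |λ| = n and V is a vacillating tableau of length k from λ to (n), equals the number of functions from a k-element set to an n-element set. -/
open YoungDiagram

namespace VacAux

/-- Row `i` of `μ` ends in a removable corner. -/
def Rem (μ : YoungDiagram) (i : ℕ) : Prop := μ.rowLen (i+1) < μ.rowLen i

/-- A cell can be added at the end of row `i` of `μ`. -/
def Addb (μ : YoungDiagram) : ℕ → Prop
  | 0 => True
  | (i+1) => Rem μ i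

theorem notmem_rowEnd (μ : YoungDiagram) (i : ℕ) : (i, μ.rowLen i) ∉ μ := by
  simp [mem_iff_lt_rowLen]

theorem rowLen_congr {μ ν : YoungDiagram} {i : ℕ}
    (h : ∀ j, (i, j) ∈ μ ↔ (i, j) ∈ ν) : μ.rowLen i = ν.rowLen i := by
  refine le_antisymm ?_ ?_
  · by_contra hlt
    push_neg at hlt
    exact notmem_rowEnd ν i ((h _).mp (mem_iff_lt_rowLen.mpr hlt))
  · by_contra hlt
    push_neg at hlt
    exact notmem_rowEnd μ i ((h _).mpr (mem_iff_lt_rowLen.mpr hlt))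

theorem lower_insert {μ : YoungDiagram} {i : ℕ} (h : Addb μ i) :
    IsLowerSet (↑(insert (i, μ.rowLen i) μ.cells) : Set (ℕ × ℕ)) := by
  intro y x hxy hy
  simp only [Finset.coe_insert, Set.mem_insert_iff, Finset.mem_coe, mem_cells] at hy ⊢
  rcases hy with hy | hy
  · subst hy
    obtain ⟨hx1, hx2⟩ := hxy
    simp only at hx1 hx2
    rcases Nat.lt_or_ge x.1 i with h1 | h1
    · right
      obtain ⟨i', rfl⟩ : ∃ i', i = i' + 1 := ⟨i - 1, by omega⟩
      have hrem : Rem μ i' := h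
      have : x.2 < μ.rowLen x.1 := by
        calc x.2 ≤ μ.rowLen (i' + 1) := hx2
        _ < μ.rowLen i' := hrem
        _ ≤ μ.rowLen x.1 := μ.rowLen_anti _ _ (by omega)
      simpa [mem_iff_lt_rowLen] using (show (x.1, x.2) ∈ μ by rw [mem_iff_lt_rowLen]; exact this)
    · have hx1' : x.1 = i := le_antisymm hx1 h1
      rcases Nat.lt_or_ge x.2 (μ.rowLen i) with h2 | h2
      · right
        have : (x.1, x.2) ∈ μ := by rw [mem_iff_lt_rowLen, hx1']; exact h2
        simpa using this
      · left
        have : x.2 = μ.rowLen i := le_antisymm hx2 h2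
        exact Prod.ext hx1' this
  · right
    exact μ.isLowerSet hxy hy

/-- Add a cell at the end of row `i`. -/
def addAt (μ : YoungDiagram) (i : ℕ) (h : Addb μ i) : YoungDiagram :=
  ⟨insert (i, μ.rowLen i) μ.cells, lower_insert h⟩

theorem mem_addAt {μ : YoungDiagram} {i : ℕ} {h : Addb μ i} {c : ℕ × ℕ} :
    c ∈ addAt μ i h ↔ c = (i, μ.rowLen i) ∨ c ∈ μ := by
  show c ∈ (insert (i, μ.rowLen i) μ.cells) ↔ _
  simp [Finset.mem_insert]

theorem addCell_addAt {μ : YoungDiagram} {i : ℕ} (h : Addb μ i) : AddCell μ (addAt μ i h) := by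
  constructor
  · rw [← cells_subset_iff]
    exact Finset.subset_insert _ _
  · show (insert (i, μ.rowLen i) μ.cells).card = _
    rw [Finset.card_insert_of_notMem (by simpa using notmem_rowEnd μ i)]

theorem addCell_iff {μ lam : YoungDiagram} :
    AddCell μ lam ↔ ∃ (i : ℕ) (h : Addb μ i), lam = addAt μ i h := by
  constructor
  · rintro ⟨hle, hcard⟩
    have hsub : μ.cells ⊆ lam.cells := hle
    have hsd : (lam.cells \ μ.cells).card = 1 := by
      have hc2 : lam.cells.card = μ.cells.card + 1 := hcard
      rw [Finset.card_sdiff_of_subset hsub, hc2]; omega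
    obtain ⟨c, hc⟩ := Finset.card_eq_one.mp hsd
    have hcells : lam.cells = insert c μ.cells := by
      have h1 : μ.cells ∪ (lam.cells \ μ.cells) = lam.cells := Finset.union_sdiff_of_subset hsub
      rw [← h1, hc]
      ext x; simp [Finset.mem_insert, or_comm]
    have hcmemsd : c ∈ lam.cells \ μ.cells := by rw [hc]; simp
    have hcmem : (c.1, c.2) ∈ lam := by
      rw [← mem_cells]
      simpa using (Finset.mem_sdiff.mp hcmemsd).1
    have hcnot : (c.1, c.2) ∉ μ := by
      simpa using (Finset.mem_sdiff.mp hcmemsd).2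
    -- every (c.1, j) with j < c.2 is in μ
    have hbelow : ∀ j, j < c.2 → (c.1, j) ∈ μ := by
      intro j hj
      have : (c.1, j) ∈ lam := lam.up_left_mem le_rfl (le_of_lt hj) hcmem
      rw [← mem_cells, hcells, Finset.mem_insert] at this
      rcases this with h' | h'
      · exfalso; rw [Prod.ext_iff] at h'; omega
      · simpa using h'
    have hc2 : c.2 = μ.rowLen c.1 := by
      have h1 : μ.rowLen c.1 ≤ c.2 := by
        by_contra h'
        push_neg at h'
        exact hcnot (mem_iff_lt_rowLen.mpr h')
      have h2 : c.2 ≤ μ.rowLen c.1 := by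
        by_contra h'
        push_neg at h'
        exact notmem_rowEnd μ c.1 (hbelow _ h')
      omega
    have haddb : Addb μ c.1 := by
      cases hc1 : c.1 with
      | zero => trivial
      | succ i' =>
        show Rem μ i'
        have : (i', c.2) ∈ lam := lam.up_left_mem (by omega) le_rfl hcmem
        rw [← mem_cells, hcells, Finset.mem_insert] at this
        rcases this with h' | h'
        · exfalso; rw [Prod.ext_iff] at h'; omega
        · have := mem_iff_lt_rowLen.mp (by simpa using h')
          rw [hc1] at hc2
          unfold Rem
          omega
    refine ⟨c.1, haddb, ?_⟩
    ext x
    rw [mem_cells, mem_cells]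
    show x ∈ lam.cells ↔ x ∈ (insert (c.1, μ.rowLen c.1) μ.cells)
    rw [hcells, ← hc2]
  · rintro ⟨i, h, rfl⟩
    exact addCell_addAt h

theorem addAt_inj {μ : YoungDiagram} {i i' : ℕ} {h : Addb μ i} {h' : Addb μ i'}
    (heq : addAt μ i h = addAt μ i' h') : i = i' := by
  have : (i, μ.rowLen i) ∈ addAt μ i' h' := by
    rw [← heq, mem_addAt]; left; rfl
  rw [mem_addAt] at this
  rcases this with h1 | h1
  · rw [Prod.ext_iff] at h1; exact h1.1
  · exact absurd h1 (notmem_rowEnd μ i)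

/-- Addable rows index the covers. -/
noncomputable def coversEquiv (μ : YoungDiagram) :
    {i : ℕ // Addb μ i} ≃ {l : YoungDiagram // AddCell μ l} := by
  refine Equiv.ofBijective (fun x => ⟨addAt μ x.1 x.2, addCell_addAt x.2⟩) ⟨?_, ?_⟩
  · rintro ⟨i, h⟩ ⟨i', h'⟩ he
    simp only [Subtype.mk.injEq] at he
    exact Subtype.ext (addAt_inj he)
  · rintro ⟨l, hl⟩
    obtain ⟨i, h, rfl⟩ := addCell_iff.mp hl
    exact ⟨⟨i, h⟩, rfl⟩


theorem rem_rowLen_pos {μ : YoungDiagram} {i : ℕ} (h : Rem μ i) : 0 < μ.rowLen i := by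
  unfold Rem at h; omega

theorem lower_erase {μ : YoungDiagram} {i : ℕ} (h : Rem μ i) :
    IsLowerSet (↑(μ.cells.erase (i, μ.rowLen i - 1)) : Set (ℕ × ℕ)) := by
  intro y x hxy hy
  simp only [Finset.coe_erase, Set.mem_diff, Finset.mem_coe, mem_cells,
    Set.mem_singleton_iff] at hy ⊢
  obtain ⟨hymem, hyne⟩ := hy
  refine ⟨μ.isLowerSet hxy hymem, ?_⟩
  rintro rfl
  obtain ⟨hx1, hx2⟩ := hxy
  simp only at hx1 hx2
  have hr := rem_rowLen_pos h
  have hy2 : y.2 < μ.rowLen y.1 := mem_iff_lt_rowLen.mp (by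
    rw [show y = (y.1, y.2) from rfl] at hymem; exact hymem)
  have hyr : μ.rowLen y.1 ≤ μ.rowLen i := μ.rowLen_anti _ _ hx1
  have hy1 : y.1 = i := by
    by_contra hne
    have hi1 : i + 1 ≤ y.1 := by omega
    have : μ.rowLen y.1 ≤ μ.rowLen (i+1) := μ.rowLen_anti _ _ hi1
    have hrem : μ.rowLen (i+1) < μ.rowLen i := h
    omega
  apply hyne
  have : y.2 = μ.rowLen i - 1 := by rw [hy1] at hy2; omega
  exact Prod.ext hy1 this

/-- Remove the corner cell of row `i`. -/
def eraseAt (μ : YoungDiagram) (i : ℕ) (h : Rem μ i) : YoungDiagram :=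
  ⟨μ.cells.erase (i, μ.rowLen i - 1), lower_erase h⟩

theorem mem_eraseAt {μ : YoungDiagram} {i : ℕ} {h : Rem μ i} {c : ℕ × ℕ} :
    c ∈ eraseAt μ i h ↔ c ≠ (i, μ.rowLen i - 1) ∧ c ∈ μ := by
  show c ∈ μ.cells.erase _ ↔ _
  simp [Finset.mem_erase]

theorem corner_mem {μ : YoungDiagram} {i : ℕ} (h : Rem μ i) : (i, μ.rowLen i - 1) ∈ μ := by
  rw [mem_iff_lt_rowLen]
  have := rem_rowLen_pos h
  omega

theorem addCell_eraseAt {μ : YoungDiagram} {i : ℕ} (h : Rem μ i) :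
    AddCell (eraseAt μ i h) μ := by
  constructor
  · rw [← cells_subset_iff]
    exact Finset.erase_subset _ _
  · show μ.cells.card = (μ.cells.erase _).card + 1
    rw [Finset.card_erase_of_mem (by simpa using corner_mem h)]
    have : 0 < μ.cells.card := Finset.card_pos.mpr ⟨_, by simpa using corner_mem h⟩
    omega

theorem rowLen_addAt_self {μ : YoungDiagram} {i : ℕ} (h : Addb μ i) :
    (addAt μ i h).rowLen i = μ.rowLen i + 1 := by
  have h1 : (i, μ.rowLen i) ∈ addAt μ i h := mem_addAt.mpr (Or.inl rfl)
  have h2 : (i, μ.rowLen i + 1) ∉ addAt μ i h := by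
    rw [mem_addAt]
    rintro (h' | h')
    · rw [Prod.ext_iff] at h'; omega
    · exact notmem_rowEnd μ i (μ.up_left_mem le_rfl (by omega) h')
  rw [mem_iff_lt_rowLen] at h1
  rw [mem_iff_lt_rowLen] at h2
  omega

theorem rowLen_addAt_ne {μ : YoungDiagram} {i j : ℕ} (h : Addb μ i) (hne : j ≠ i) :
    (addAt μ i h).rowLen j = μ.rowLen j := by
  apply rowLen_congr
  intro k
  rw [mem_addAt]
  constructor
  · rintro (h' | h')
    · exfalso; rw [Prod.ext_iff] at h'; exact hne h'.1
    · exact h'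
  · exact Or.inr

theorem remCell_iff {μ ρ : YoungDiagram} :
    AddCell ρ μ ↔ ∃ (i : ℕ) (h : Rem μ i), ρ = eraseAt μ i h := by
  constructor
  · intro hadd
    obtain ⟨i, h, rfl⟩ := addCell_iff.mp hadd
    have hself := rowLen_addAt_self h
    have hrem : Rem (addAt ρ i h) i := by
      show (addAt ρ i h).rowLen (i+1) < (addAt ρ i h).rowLen i
      rw [rowLen_addAt_ne h (by omega), hself]
      have : ρ.rowLen (i+1) ≤ ρ.rowLen i := ρ.rowLen_anti _ _ (by omega)
      omega
    refine ⟨i, hrem, ?_⟩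
    ext c
    rw [mem_cells, mem_cells, mem_eraseAt, mem_addAt, hself]
    have hcorner : (i, ρ.rowLen i + 1 - 1) = (i, ρ.rowLen i) := by norm_num
    rw [hcorner]
    constructor
    · intro hc
      constructor
      · rintro rfl; exact notmem_rowEnd ρ i hc
      · exact Or.inr hc
    · rintro ⟨hne, (h' | h')⟩
      · exact absurd h' hne
      · exact h'
  · rintro ⟨i, h, rfl⟩
    exact addCell_eraseAt h

theorem eraseAt_inj {μ : YoungDiagram} {i i' : ℕ} {h : Rem μ i} {h' : Rem μ i'}
    (heq : eraseAt μ i h = eraseAt μ i' h') : i = i' := by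
  by_contra hne
  have h1 : (i', μ.rowLen i' - 1) ∈ eraseAt μ i h := by
    rw [mem_eraseAt]
    refine ⟨?_, corner_mem h'⟩
    intro hcontra
    rw [Prod.ext_iff] at hcontra
    exact hne hcontra.1.symm
  rw [heq, mem_eraseAt] at h1
  exact h1.1 rfl

noncomputable def cocoversEquiv (μ : YoungDiagram) :
    {i : ℕ // Rem μ i} ≃ {r : YoungDiagram // AddCell r μ} := by
  refine Equiv.ofBijective (fun x => ⟨eraseAt μ x.1 x.2, addCell_eraseAt x.2⟩) ⟨?_, ?_⟩
  · rintro ⟨i, h⟩ ⟨i', h'⟩ he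
    simp only [Subtype.mk.injEq] at he
    exact Subtype.ext (eraseAt_inj he)
  · rintro ⟨r, hr⟩
    obtain ⟨i, h, rfl⟩ := remCell_iff.mp hr
    exact ⟨⟨i, h⟩, rfl⟩

/-- addable rows = removable rows + 1 -/
def addbRemOption (μ : YoungDiagram) : {i : ℕ // Addb μ i} ≃ Option {i : ℕ // Rem μ i} where
  toFun := fun x => match x with
    | ⟨0, _⟩ => none
    | ⟨i+1, h⟩ => some ⟨i, h⟩
  invFun := fun o => match o with
    | none => ⟨0, trivial⟩
    | some ⟨i, h⟩ => ⟨i+1, h⟩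
  left_inv := by rintro ⟨(_|i), h⟩ <;> rfl
  right_inv := by rintro (_ | ⟨i, h⟩) <;> rfl

instance finite_rem (μ : YoungDiagram) : Finite {i : ℕ // Rem μ i} := by
  have : {i : ℕ | Rem μ i}.Finite := by
    apply (Set.finite_Iio (μ.colLen 0)).subset
    intro i hi
    have : (i, 0) ∈ μ := by
      rw [mem_iff_lt_rowLen]
      exact rem_rowLen_pos hi
    rw [mem_iff_lt_colLen] at this
    exact this
  exact this.to_subtype

instance finite_addb (μ : YoungDiagram) : Finite {i : ℕ // Addb μ i} := by
  haveI := Fintype.ofFinite {i : ℕ // Rem μ i}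
  exact Finite.of_equiv _ (addbRemOption μ).symm

instance finite_covers (μ : YoungDiagram) : Finite {l : YoungDiagram // AddCell μ l} :=
  Finite.of_equiv _ (coversEquiv μ)

instance finite_cocovers (μ : YoungDiagram) : Finite {r : YoungDiagram // AddCell r μ} :=
  Finite.of_equiv _ (cocoversEquiv μ)

theorem covers_card_eq (μ : YoungDiagram) :
    Nat.card {l : YoungDiagram // AddCell μ l} =
      Nat.card {r : YoungDiagram // AddCell r μ} + 1 := by
  rw [← Nat.card_congr (coversEquiv μ), ← Nat.card_congr (cocoversEquiv μ),
    Nat.card_congr (addbRemOption μ), Finite.card_option]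


theorem eq_of_le_of_card_le {μ ν : YoungDiagram} (h : μ ≤ ν) (hc : ν.card ≤ μ.card) : μ = ν := by
  have : μ.cells = ν.cells := Finset.eq_of_subset_of_card_le h hc
  exact YoungDiagram.ext this

theorem card_sup_add_card_inf (μ ν : YoungDiagram) :
    (μ ⊔ ν).card + (μ ⊓ ν).card = μ.card + ν.card := by
  show ((μ ⊔ ν).cells).card + ((μ ⊓ ν).cells).card = _
  rw [cells_sup, cells_inf]
  exact Finset.card_union_add_card_inter _ _

theorem common_cover {ν ν' lam : YoungDiagram} (h : AddCell ν lam) (h' : AddCell ν' lam)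
    (hne : ν ≠ ν') : lam = ν ⊔ ν' ∧ AddCell (ν ⊓ ν') ν ∧ AddCell (ν ⊓ ν') ν' := by
  obtain ⟨hle, hcard⟩ := h
  obtain ⟨hle', hcard'⟩ := h'
  have hm : ν.card = ν'.card := by omega
  have hsuple : ν ⊔ ν' ≤ lam := sup_le hle hle'
  have hsupcard_le : (ν ⊔ ν').card ≤ lam.card := Finset.card_le_card hsuple
  have hsupcard_ge : ν.card + 1 ≤ (ν ⊔ ν').card := by
    by_contra hlt
    push_neg at hlt
    have h1 : ν = ν ⊔ ν' := eq_of_le_of_card_le le_sup_left (by omega)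
    have h2 : ν' ≤ ν := h1 ▸ le_sup_right
    exact hne (eq_of_le_of_card_le h2 (by omega)).symm
  have hlam : lam = ν ⊔ ν' := (eq_of_le_of_card_le hsuple (by omega)).symm
  have hinf := card_sup_add_card_inf ν ν'
  have hsupcard : (ν ⊔ ν').card = ν.card + 1 := by omega
  refine ⟨hlam, ⟨inf_le_left, by omega⟩, ⟨inf_le_right, by omega⟩⟩

theorem common_cocover {ν ν' ρ : YoungDiagram} (h : AddCell ρ ν) (h' : AddCell ρ ν')
    (hne : ν ≠ ν') : ρ = ν ⊓ ν' ∧ AddCell ν (ν ⊔ ν') ∧ AddCell ν' (ν ⊔ ν') := by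
  obtain ⟨hle, hcard⟩ := h
  obtain ⟨hle', hcard'⟩ := h'
  have hm : ν.card = ν'.card := by omega
  have hinfle : ρ ≤ ν ⊓ ν' := le_inf hle hle'
  have hinfcard_ge : ρ.card ≤ (ν ⊓ ν').card := Finset.card_le_card hinfle
  have hinfcard_le : (ν ⊓ ν').card ≤ ρ.card := by
    by_contra hlt
    push_neg at hlt
    have hc1 : ν.card ≤ (ν ⊓ ν').card := by omega
    have h1 : ν ⊓ ν' = ν := (eq_of_le_of_card_le (inf_le_left : ν ⊓ ν' ≤ ν) (by omega)).symm ▸ rfl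
    have h2 : ν ≤ ν' := h1 ▸ inf_le_right
    exact hne (eq_of_le_of_card_le h2 (by omega))
  have hρ : ρ = ν ⊓ ν' := eq_of_le_of_card_le hinfle (by omega)
  have hinf := card_sup_add_card_inf ν ν'
  refine ⟨hρ, ⟨le_sup_left, by omega⟩, ⟨le_sup_right, by omega⟩⟩


theorem chain_card {lam : YoungDiagram} {g : ℕ → YoungDiagram} (hg : g ∈ sytChains lam) :
    ∀ i, i ≤ lam.card → (g i).card = i := by
  obtain ⟨h0, hconst, hstep⟩ := hg
  intro i
  induction i with
  | zero => intro _; rw [h0]; simp [YoungDiagram.card]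
  | succ i ih =>
    intro hi
    rw [(hstep i (by omega)).2, ih (by omega)]

theorem chain_mono {lam : YoungDiagram} {g : ℕ → YoungDiagram} (hg : g ∈ sytChains lam) :
    ∀ i, g i ≤ lam := by
  obtain ⟨h0, hconst, hstep⟩ := hg
  have hstep' : ∀ i, g i ≤ g (i + 1) := by
    intro i
    rcases Nat.lt_or_ge i lam.card with h | h
    · exact (hstep i h).1
    · rw [hconst i h, hconst (i+1) (by omega)]
  have key : ∀ d i, g i ≤ g (i + d) := by
    intro d
    induction d with
    | zero => intro i; rfl
    | succ d ih => intro i; exact le_trans (ih i) (by rw [← Nat.add_assoc]; exact hstep' _)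
  intro i
  calc g i ≤ g (i + lam.card) := key _ _
  _ = lam := hconst _ (by omega)

theorem sub_finite (lam : YoungDiagram) : {μ : YoungDiagram | μ ≤ lam}.Finite := by
  apply Set.Finite.of_finite_image (f := YoungDiagram.cells)
  · apply (lam.cells.powerset : Finset _).finite_toSet.subset
    rintro s ⟨μ, hμ, rfl⟩
    rw [Finset.mem_coe, Finset.mem_powerset]
    exact hμ
  · intro a _ b _ hab
    exact YoungDiagram.ext hab

theorem sytChains_finite (lam : YoungDiagram) : (sytChains lam).Finite := by
  apply Set.Finite.of_finite_image
    (f := fun g => (fun i : Fin (lam.card + 1) => g i.val))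
  · apply Set.Finite.subset (Set.Finite.pi (fun _ : Fin (lam.card + 1) => sub_finite lam))
    rintro h ⟨g, hg, rfl⟩
    intro i _
    exact chain_mono hg i.val
  · intro g hg g' hg' he
    funext j
    rcases Nat.lt_or_ge j (lam.card + 1) with h | h
    · exact congrFun he ⟨j, h⟩
    · rw [hg.2.1 j (by omega), hg'.2.1 j (by omega)]

instance (lam : YoungDiagram) : Finite ↥(sytChains lam) := (sytChains_finite lam).to_subtype

/-- Reconstruction map for the branching rule. -/
def branchF (lam : YoungDiagram) :
    (Σ ν : {ν : YoungDiagram // AddCell ν lam}, ↥(sytChains ν.val)) → (ℕ → YoungDiagram) :=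
  fun x => fun j => if j < lam.card then x.2.val j else lam

theorem branchF_mem (lam : YoungDiagram) (hpos : 0 < lam.card)
    (x : Σ ν : {ν : YoungDiagram // AddCell ν lam}, ↥(sytChains ν.val)) :
    branchF lam x ∈ sytChains lam := by
  obtain ⟨⟨ν, hν⟩, g, hg⟩ := x
  have hg' : g ∈ sytChains ν := hg
  obtain ⟨hg0, hgc, hgs⟩ := hg'
  have hνc : ν.card + 1 = lam.card := hν.2.symm
  refine ⟨?_, ?_, ?_⟩
  · show (if 0 < lam.card then g 0 else lam) = ⊥
    rw [if_pos hpos]; exact hg0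
  · intro j hj
    show (if j < lam.card then g j else lam) = lam
    rw [if_neg (by omega)]
  · intro i hi
    show AddCell (if i < lam.card then g i else lam) (if i + 1 < lam.card then g (i+1) else lam)
    rcases Nat.lt_or_ge (i+1) lam.card with h | h
    · rw [if_pos (by omega), if_pos h]
      exact hgs i (by omega)
    · rw [if_pos (by omega), if_neg (by omega)]
      have : g i = ν := hgc i (by omega)
      rw [this]
      exact hν

theorem branchF_inj (lam : YoungDiagram) (hpos : 0 < lam.card) :
    Function.Injective (branchF lam) := by
  rintro ⟨⟨ν, hν⟩, g, hg⟩ ⟨⟨ν', hν'⟩, g', hg'⟩ he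
  have hgm : g ∈ sytChains ν := hg
  have hgm' : g' ∈ sytChains ν' := hg'
  have hνc : ν.card + 1 = lam.card := hν.2.symm
  have hνc' : ν'.card + 1 = lam.card := hν'.2.symm
  have hlt : ∀ j, j < lam.card → g j = g' j := by
    intro j hj
    have := congrFun he j
    simpa [branchF, if_pos hj] using this
  have hνν : ν = ν' := by
    have e1 : g ν.card = ν := hgm.2.1 ν.card le_rfl
    have e2 : g' ν'.card = ν' := hgm'.2.1 ν'.card le_rfl
    have e3 : ν.card = ν'.card := by omega
    rw [← e1, ← e2, ← e3, hlt ν.card (by omega)]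
  have hgg : g = g' := by
    funext j
    rcases Nat.lt_or_ge j lam.card with h | h
    · exact hlt j h
    · rw [hgm.2.1 j (by omega), hgm'.2.1 j (by omega), hνν]
  subst hνν
  subst hgg
  rfl

/-- Branching: chains to `lam` are chains to a cocover of `lam`, extended. -/
noncomputable def branchEquiv (lam : YoungDiagram) (hpos : 0 < lam.card) :
    (Σ ν : {ν : YoungDiagram // AddCell ν lam}, ↥(sytChains ν.val)) ≃ ↥(sytChains lam) := by
  refine Equiv.ofBijective (fun x => ⟨branchF lam x, branchF_mem lam hpos x⟩)
    ⟨fun a b hab => branchF_inj lam hpos (by simpa using Subtype.ext_iff.mp hab), ?_⟩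
  rintro ⟨g, hg⟩
  have hcard : (g (lam.card - 1)).card = lam.card - 1 := chain_card hg _ (by omega)
  have hcov : AddCell (g (lam.card - 1)) lam := by
    have hst := hg.2.2 (lam.card - 1) (by omega)
    have hc : g (lam.card - 1 + 1) = lam := by
      rw [show lam.card - 1 + 1 = lam.card by omega, hg.2.1 _ le_rfl]
    rw [hc] at hst
    exact hst
  refine ⟨⟨⟨g (lam.card - 1), hcov⟩, ⟨fun j => g (min j (lam.card - 1)), ?_, ?_, ?_⟩⟩, ?_⟩
  · show g (min 0 (lam.card - 1)) = ⊥
    rw [Nat.min_eq_left (by omega)]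
    exact hg.1
  · intro j hj
    rw [hcard] at hj
    show g (min j (lam.card - 1)) = _
    rw [Nat.min_eq_right hj]
  · intro i hi
    rw [hcard] at hi
    show AddCell (g (min i (lam.card - 1))) (g (min (i+1) (lam.card - 1)))
    rw [Nat.min_eq_left (by omega), Nat.min_eq_left (by omega)]
    exact hg.2.2 i (by omega)
  · apply Subtype.ext
    funext j
    show (if j < lam.card then g (min j (lam.card - 1)) else lam) = g j
    rcases Nat.lt_or_ge j lam.card with h | h
    · rw [if_pos h, Nat.min_eq_left (by omega)]
    · rw [if_neg (by omega), hg.2.1 j h]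


theorem natCard_sigma {ι : Type} [Fintype ι] (β : ι → Type) [∀ i, Finite (β i)] :
    Nat.card (Σ i, β i) = ∑ i, Nat.card (β i) := by
  letI : ∀ i, Fintype (β i) := fun i => Fintype.ofFinite _
  simp only [Nat.card_eq_fintype_card]
  exact Fintype.card_sigma

theorem sum_branch (lam : YoungDiagram) [Fintype {ν : YoungDiagram // AddCell ν lam}]
    (hpos : 0 < lam.card) :
    ∑ ν : {ν : YoungDiagram // AddCell ν lam}, Nat.card ↥(sytChains ν.val) =
      Nat.card ↥(sytChains lam) := by
  rw [← natCard_sigma, Nat.card_congr (branchEquiv lam hpos)]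

theorem eq_bot_of_card_eq_zero {μ : YoungDiagram} (h : μ.card = 0) : μ = ⊥ := by
  ext c
  have : μ.cells = ∅ := Finset.card_eq_zero.mp h
  rw [this, cells_bot]

/-- Chains of length `ν.card + 1` ending at a cover of `ν`. -/
def Ttot (ν : YoungDiagram) : Set (ℕ → YoungDiagram) :=
  {g | ∃ lam, AddCell ν lam ∧ g ∈ sytChains lam}

theorem Ttot_finite (ν : YoungDiagram) : (Ttot ν).Finite := by
  have hfin : Finite ↥{l : YoungDiagram | AddCell ν l} := finite_covers ν
  apply Set.Finite.subset ((Set.toFinite {l : YoungDiagram | AddCell ν l}).biUnion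
    (fun l _ => sytChains_finite l))
  rintro g ⟨lam, hlam, hg⟩
  exact Set.mem_biUnion hlam hg

instance (ν : YoungDiagram) : Finite ↥(Ttot ν) := (Ttot_finite ν).to_subtype

/-- Pairs ((cover `l`, cocover `ν'` of `l`), chain to `ν'`). -/
abbrev Xt (ν : YoungDiagram) : Type :=
  {x : (YoungDiagram × YoungDiagram) × (ℕ → YoungDiagram) //
    AddCell ν x.1.1 ∧ AddCell x.1.2 x.1.1 ∧ x.2 ∈ sytChains x.1.2}

abbrev X1t (ν : YoungDiagram) : Type :=
  {l : YoungDiagram // AddCell ν l} × ↥(sytChains ν)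

abbrev X2t (ν : YoungDiagram) : Type :=
  {x : (YoungDiagram × YoungDiagram) × (ℕ → YoungDiagram) //
    AddCell ν x.1.1 ∧ AddCell x.1.2 x.1.1 ∧ x.1.2 ≠ ν ∧ x.2 ∈ sytChains x.1.2}

abbrev Y2t (ν : YoungDiagram) : Type :=
  {y : (YoungDiagram × YoungDiagram) × (ℕ → YoungDiagram) //
    AddCell y.1.1 ν ∧ AddCell y.1.1 y.1.2 ∧ y.1.2 ≠ ν ∧ y.2 ∈ sytChains y.1.2}

abbrev W2t (ν ρ : YoungDiagram) : Type :=
  {z : YoungDiagram × (ℕ → YoungDiagram) //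
    AddCell ρ z.1 ∧ z.1 ≠ ν ∧ z.2 ∈ sytChains z.1}

abbrev Vt (ρ : YoungDiagram) : Type :=
  {z : YoungDiagram × (ℕ → YoungDiagram) // AddCell ρ z.1 ∧ z.2 ∈ sytChains z.1}

/-- Reconstruction `Xt ν → Ttot ν`. -/
noncomputable def eTX (ν : YoungDiagram) : Xt ν ≃ ↥(Ttot ν) := by
  refine Equiv.ofBijective (fun x =>
    ⟨branchF x.val.1.1 ⟨⟨x.val.1.2, x.prop.2.1⟩, ⟨x.val.2, x.prop.2.2⟩⟩,
      ⟨x.val.1.1, x.prop.1, branchF_mem _ (by have := x.prop.1.2; omega) _⟩⟩) ⟨?_, ?_⟩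
  · rintro ⟨⟨⟨l, ν'⟩, g⟩, ⟨hl, hν', hg⟩⟩ ⟨⟨⟨l2, ν'2⟩, g2⟩, ⟨hl2, hν'2, hg2⟩⟩ he
    have he' := Subtype.ext_iff.mp he
    simp only at he'
    have hgm : g ∈ sytChains ν' := hg
    have hgm2 : g2 ∈ sytChains ν'2 := hg2
    have hc1 : l.card = ν.card + 1 := hl.2
    have hc2 : l2.card = ν.card + 1 := hl2.2
    have hcν' : ν'.card + 1 = l.card := hν'.2.symm
    have hcν'2 : ν'2.card + 1 = l2.card := hν'2.2.symm
    have hll : l = l2 := by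
      have e1 := congrFun he' (ν.card + 1)
      simp only [branchF] at e1
      rwa [if_neg (by omega : ¬ (ν.card + 1 < l.card)),
        if_neg (by omega : ¬ (ν.card + 1 < l2.card))] at e1
    have hvv : ν' = ν'2 := by
      have e1 := congrFun he' ν.card
      simp only [branchF] at e1
      rw [if_pos (by omega), if_pos (by omega)] at e1
      have e2 : g ν.card = ν' := hgm.2.1 ν.card (Nat.le_of_eq (by omega))
      have e3 : g2 ν.card = ν'2 := hgm2.2.1 ν.card (Nat.le_of_eq (by omega))
      rw [← e2, ← e3]
      exact e1
    have hgg : g = g2 := by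
      funext j
      rcases Nat.lt_or_ge j l.card with h | h
      · have e1 := congrFun he' j
        simp only [branchF] at e1
        rwa [if_pos h, if_pos (by omega)] at e1
      · rw [hgm.2.1 j (by omega), hgm2.2.1 j (by omega), hvv]
    subst hll hvv hgg
    rfl
  · rintro ⟨g, lam, hlam, hg⟩
    have hpos : 0 < lam.card := by have := hlam.2; omega
    have hcard : (g (lam.card - 1)).card = lam.card - 1 := chain_card hg _ (by omega)
    have hcov : AddCell (g (lam.card - 1)) lam := by
      have hst := hg.2.2 (lam.card - 1) (by omega)
      have hc : g (lam.card - 1 + 1) = lam := by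
        rw [show lam.card - 1 + 1 = lam.card by omega, hg.2.1 _ le_rfl]
      rw [hc] at hst
      exact hst
    have htr : (fun j => g (min j (lam.card - 1))) ∈ sytChains (g (lam.card - 1)) := by
      refine ⟨?_, ?_, ?_⟩
      · show g (min 0 (lam.card - 1)) = ⊥
        rw [Nat.min_eq_left (by omega)]
        exact hg.1
      · intro j hj
        rw [hcard] at hj
        show g (min j (lam.card - 1)) = _
        rw [Nat.min_eq_right hj]
      · intro i hi
        rw [hcard] at hi
        show AddCell (g (min i (lam.card - 1))) (g (min (i+1) (lam.card - 1)))
        rw [Nat.min_eq_left (by omega), Nat.min_eq_left (by omega)]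
        exact hg.2.2 i (by omega)
    refine ⟨⟨((lam, g (lam.card - 1)), fun j => g (min j (lam.card - 1))), hlam, hcov, htr⟩, ?_⟩
    apply Subtype.ext
    funext j
    show (if j < lam.card then g (min j (lam.card - 1)) else lam) = g j
    rcases Nat.lt_or_ge j lam.card with h | h
    · rw [if_pos h, Nat.min_eq_left (by omega)]
    · rw [if_neg (by omega), hg.2.1 j h]

noncomputable def eSplit (ν : YoungDiagram) : X1t ν ⊕ X2t ν ≃ Xt ν := by
  refine Equiv.ofBijective (Sum.elim
    (fun p => (⟨((p.1.val, ν), p.2.val), p.1.prop, p.1.prop, p.2.prop⟩ : Xt ν))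
    (fun x => (⟨x.val, x.prop.1, x.prop.2.1, x.prop.2.2.2⟩ : Xt ν))) ⟨?_, ?_⟩
  · rintro (⟨l, g⟩ | ⟨x, hx⟩) (⟨l2, g2⟩ | ⟨x2, hx2⟩) he <;>
      simp only [Sum.elim_inl, Sum.elim_inr] at he <;>
      have hv := congrArg Subtype.val he
    · simp only [Prod.mk.injEq] at hv
      have h1 : l = l2 := Subtype.ext hv.1.1
      have h2 : g = g2 := Subtype.ext hv.2
      rw [h1, h2]
    · exact absurd (congrArg (fun q => q.1.2) hv).symm hx2.2.2.1
    · exact absurd (congrArg (fun q => q.1.2) hv) hx.2.2.1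
    · exact congrArg Sum.inr (Subtype.ext hv)
  · rintro ⟨⟨⟨l, ν'⟩, g⟩, hl, hν', hg⟩
    by_cases hcase : ν' = ν
    · subst hcase
      exact ⟨Sum.inl (⟨l, hl⟩, ⟨g, hg⟩), rfl⟩
    · exact ⟨Sum.inr ⟨((l, ν'), g), hl, hν', hcase, hg⟩, rfl⟩

noncomputable def eXY (ν : YoungDiagram) : X2t ν ≃ Y2t ν where
  toFun := fun x =>
    ⟨((ν ⊓ x.val.1.2, x.val.1.2), x.val.2),
      (common_cover x.prop.1 x.prop.2.1 (Ne.symm x.prop.2.2.1)).2.1,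
      (common_cover x.prop.1 x.prop.2.1 (Ne.symm x.prop.2.2.1)).2.2,
      x.prop.2.2.1, x.prop.2.2.2⟩
  invFun := fun y =>
    ⟨((ν ⊔ y.val.1.2, y.val.1.2), y.val.2),
      (common_cocover y.prop.1 y.prop.2.1 (Ne.symm y.prop.2.2.1)).2.1,
      (common_cocover y.prop.1 y.prop.2.1 (Ne.symm y.prop.2.2.1)).2.2,
      y.prop.2.2.1, y.prop.2.2.2⟩
  left_inv := by
    rintro ⟨⟨⟨l, ν'⟩, g⟩, hl, hν', hne, hg⟩
    dsimp only at hl hν' hne hg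
    apply Subtype.ext
    show ((ν ⊔ ν', ν'), g) = ((l, ν'), g)
    rw [(common_cover hl hν' (Ne.symm hne)).1]
  right_inv := by
    rintro ⟨⟨⟨ρ, ν'⟩, g⟩, hρ, hν', hne, hg⟩
    dsimp only at hρ hν' hne hg
    apply Subtype.ext
    show ((ν ⊓ ν', ν'), g) = ((ρ, ν'), g)
    rw [(common_cocover hρ hν' (Ne.symm hne)).1]

noncomputable def eYsig (ν : YoungDiagram) :
    (Σ ρ : {ρ : YoungDiagram // AddCell ρ ν}, W2t ν ρ.val) ≃ Y2t ν := by
  refine Equiv.ofBijective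
    (fun x => ⟨((x.1.val, x.2.val.1), x.2.val.2),
      x.1.prop, x.2.prop.1, x.2.prop.2.1, x.2.prop.2.2⟩) ⟨?_, ?_⟩
  · rintro ⟨⟨ρ, hρ⟩, ⟨⟨ν', g⟩, hz⟩⟩ ⟨⟨ρ2, hρ2⟩, ⟨⟨ν'2, g2⟩, hz2⟩⟩ he
    have hv := congrArg Subtype.val he
    simp only [Prod.mk.injEq] at hv
    obtain ⟨⟨h1, h2⟩, h3⟩ := hv
    subst h1 h2 h3
    rfl
  · rintro ⟨⟨⟨ρ, ν'⟩, g⟩, hρ, hν', hne, hg⟩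
    exact ⟨⟨⟨ρ, hρ⟩, ⟨(ν', g), hν', hne, hg⟩⟩, rfl⟩

noncomputable def eV (ρ : YoungDiagram) : Vt ρ ≃ ↥(Ttot ρ) := by
  refine Equiv.ofBijective (fun z => ⟨z.val.2, z.val.1, z.prop.1, z.prop.2⟩) ⟨?_, ?_⟩
  · rintro ⟨⟨l, g⟩, hl, hg⟩ ⟨⟨l2, g2⟩, hl2, hg2⟩ he
    have he' : g = g2 := Subtype.ext_iff.mp he
    have hgm : g ∈ sytChains l := hg
    have hgm2 : g2 ∈ sytChains l2 := hg2
    have hll : l = l2 := by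
      rw [← hgm.2.1 l.card le_rfl, ← hgm2.2.1 l2.card le_rfl, he',
        show l.card = l2.card by rw [hl.2, hl2.2]]
    subst hll he'
    rfl
  · rintro ⟨g, l, hl, hg⟩
    exact ⟨⟨(l, g), hl, hg⟩, rfl⟩

noncomputable def eVsplit (ν ρ : YoungDiagram) (hρν : AddCell ρ ν) :
    W2t ν ρ ⊕ ↥(sytChains ν) ≃ Vt ρ := by
  refine Equiv.ofBijective (Sum.elim
    (fun w => (⟨w.val, w.prop.1, w.prop.2.2⟩ : Vt ρ))
    (fun g => (⟨(ν, g.val), hρν, g.prop⟩ : Vt ρ))) ⟨?_, ?_⟩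
  · rintro (⟨w, hw⟩ | ⟨g, hgm⟩) (⟨w2, hw2⟩ | ⟨g2, hgm2⟩) he <;>
      simp only [Sum.elim_inl, Sum.elim_inr] at he <;>
      have hv := congrArg Subtype.val he
    · exact congrArg Sum.inl (Subtype.ext hv)
    · exact absurd (congrArg (fun q => q.1) hv) hw.2.1
    · exact absurd (congrArg (fun q => q.1) hv).symm hw2.2.1
    · exact congrArg Sum.inr (Subtype.ext (congrArg (fun q => q.2) hv))
  · rintro ⟨⟨l, g⟩, hl, hg⟩
    by_cases hcase : l = ν
    · subst hcase
      exact ⟨Sum.inr ⟨g, hg⟩, rfl⟩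
    · exact ⟨Sum.inl ⟨(l, g), hl, hcase, hg⟩, rfl⟩

instance (ν : YoungDiagram) : Finite (Xt ν) := Finite.of_equiv _ (eTX ν).symm
instance (ν : YoungDiagram) : Finite (X2t ν) :=
  Finite.of_injective (fun x => (eSplit ν) (Sum.inr x)) (fun a b h => by
    have := (eSplit ν).injective h
    simpa using this)
instance (ν : YoungDiagram) : Finite (Y2t ν) := Finite.of_equiv _ (eXY ν)
instance (ρ : YoungDiagram) : Finite (Vt ρ) := Finite.of_equiv _ (eV ρ).symm
instance (ν ρ : YoungDiagram) : Finite (W2t ν ρ) := by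
  apply Finite.of_injective (fun w : W2t ν ρ => (⟨w.val, w.prop.1, w.prop.2.2⟩ : Vt ρ))
  intro a b h
  have h' := congrArg (fun v : Vt ρ => v.val) h
  exact Subtype.ext h'

/-- The key counting lemma: `|T(ν)| = (|ν|+1) · f^ν`. -/
theorem cardTtot (m : ℕ) : ∀ ν : YoungDiagram, ν.card = m →
    Nat.card ↥(Ttot ν) = (m + 1) * Nat.card ↥(sytChains ν) := by
  induction m using Nat.strong_induction_on with
  | _ m IH =>
    intro ν hν
    letI : Fintype {ρ : YoungDiagram // AddCell ρ ν} := Fintype.ofFinite _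
    have hsplit : Nat.card ↥(Ttot ν) = Nat.card (X1t ν) + Nat.card (X2t ν) := by
      rw [← Nat.card_congr (eTX ν), ← Nat.card_congr (eSplit ν), Nat.card_sum]
    have hX1 : Nat.card (X1t ν) =
        Nat.card {l : YoungDiagram // AddCell ν l} * Nat.card ↥(sytChains ν) :=
      Nat.card_prod _ _
    have hUD : Nat.card {l : YoungDiagram // AddCell ν l} =
        Nat.card {ρ : YoungDiagram // AddCell ρ ν} + 1 := covers_card_eq ν
    rcases Nat.eq_zero_or_pos m with hm0 | hmpos
    · subst hm0
      have hbot : ν = ⊥ := eq_bot_of_card_eq_zero hν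
      have hempty : IsEmpty (X2t ν) := by
        constructor
        rintro ⟨⟨⟨l, ν'⟩, g⟩, hl, hν', hne, hg⟩
        dsimp only at hl hν' hne hg
        apply hne
        have h1 : l.card = ν.card + 1 := hl.2
        have h2 : l.card = ν'.card + 1 := hν'.2
        have h3 : ν'.card = 0 := by omega
        rw [eq_bot_of_card_eq_zero h3, hbot]
      have hempty2 : IsEmpty {ρ : YoungDiagram // AddCell ρ ν} := by
        constructor
        rintro ⟨ρ, hρ⟩
        have := hρ.2
        omega
      haveI := hempty
      haveI := hempty2
      rw [hsplit, hX1, hUD]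
      rw [Nat.card_of_isEmpty (α := X2t ν), Nat.card_of_isEmpty (α := {ρ : YoungDiagram // AddCell ρ ν})]
      ring
    · -- main case
      have hX2 : Nat.card (X2t ν) =
          ∑ ρ : {ρ : YoungDiagram // AddCell ρ ν}, Nat.card (W2t ν ρ.val) := by
        rw [Nat.card_congr (eXY ν), ← Nat.card_congr (eYsig ν), natCard_sigma]
      have hW : ∀ ρ : {ρ : YoungDiagram // AddCell ρ ν},
          Nat.card (W2t ν ρ.val) + Nat.card ↥(sytChains ν) =
            m * Nat.card ↥(sytChains ρ.val) := by
        rintro ⟨ρ, hρ⟩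
        have hρcard : ρ.card = m - 1 := by have := hρ.2; omega
        have hV : Nat.card (Vt ρ) = Nat.card ↥(Ttot ρ) := Nat.card_congr (eV ρ)
        have hVs : Nat.card (W2t ν ρ) + Nat.card ↥(sytChains ν) = Nat.card (Vt ρ) := by
          rw [← Nat.card_congr (eVsplit ν ρ hρ), Nat.card_sum]
        have hIH := IH (m - 1) (by omega) ρ hρcard
        rw [hVs, hV, hIH, show m - 1 + 1 = m by omega]
      have hbranch : ∑ ρ : {ρ : YoungDiagram // AddCell ρ ν},
          Nat.card ↥(sytChains ρ.val) = Nat.card ↥(sytChains ν) :=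
        sum_branch ν (by omega)
      set a := Nat.card ↥(sytChains ν) with ha
      set d := Nat.card {ρ : YoungDiagram // AddCell ρ ν} with hd
      set S := ∑ ρ : {ρ : YoungDiagram // AddCell ρ ν}, Nat.card (W2t ν ρ.val) with hS
      have hsum : S + d * a = m * a := by
        have : ∑ ρ : {ρ : YoungDiagram // AddCell ρ ν},
            (Nat.card (W2t ν ρ.val) + a) = ∑ ρ : {ρ : YoungDiagram // AddCell ρ ν},
              m * Nat.card ↥(sytChains ρ.val) := Finset.sum_congr rfl (fun ρ _ => hW ρ)
        rw [Finset.sum_add_distrib, Finset.sum_const, smul_eq_mul, ← Finset.mul_sum, hbranch]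
          at this
        have hcards : (Finset.univ : Finset {ρ : YoungDiagram // AddCell ρ ν}).card = d := by
          rw [hd, Nat.card_eq_fintype_card]
          exact Finset.card_univ
        rw [hcards] at this
        exact this
      have hT : Nat.card ↥(Ttot ν) = (d + 1) * a + S := by
        rw [hsplit, hX1, hUD, hX2]
      have key : Nat.card ↥(Ttot ν) + d * a = (m + 1) * a + d * a := by
        rw [hT]
        have e1 : (d + 1) * a + S + d * a = (d + 1) * a + (S + d * a) := by ring
        rw [e1, hsum]
        ring
      exact Nat.add_right_cancel key


theorem mem_rowD {n : ℕ} {c : ℕ × ℕ} : c ∈ rowD n ↔ c.1 = 0 ∧ c.2 < n := by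
  rw [rowD, mem_ofRowLens]
  constructor
  · rintro ⟨h, h2⟩
    simp only [List.length_singleton] at h
    refine ⟨by omega, ?_⟩
    simpa using h2
  · rintro ⟨h1, h2⟩
    refine ⟨by simp [h1], ?_⟩
    simp [h1]
    exact h2

theorem cells_rowD (n : ℕ) : (rowD n).cells = {0} ×ˢ Finset.range n := by
  ext ⟨i, j⟩
  rw [mem_cells, mem_rowD]
  simp only [Finset.mem_product, Finset.mem_singleton, Finset.mem_range]

theorem card_rowD (n : ℕ) : (rowD n).card = n := by
  show (rowD n).cells.card = n
  rw [cells_rowD, Finset.card_product]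
  simp

theorem eq_rowD_of_le_rowD {n : ℕ} {μ : YoungDiagram} (h : μ ≤ rowD n) :
    μ = rowD μ.card := by
  have hrow : μ = rowD (μ.rowLen 0) := by
    ext ⟨i, j⟩
    rw [mem_cells, mem_cells, mem_rowD]
    constructor
    · intro hm
      have h0 : i = 0 := (mem_rowD.mp (h hm)).1
      subst h0
      exact ⟨rfl, mem_iff_lt_rowLen.mp hm⟩
    · rintro ⟨h1, h2⟩
      subst h1
      exact mem_iff_lt_rowLen.mpr h2
  have hcard : μ.card = μ.rowLen 0 := by
    conv_lhs => rw [hrow]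
    rw [card_rowD]
  rw [← hcard] at hrow
  exact hrow

theorem addCell_rowD (i : ℕ) : AddCell (rowD i) (rowD (i + 1)) := by
  constructor
  · intro c hc
    rw [mem_rowD] at hc ⊢
    omega
  · rw [card_rowD, card_rowD]

theorem sytChains_rowD (n : ℕ) :
    sytChains (rowD n) = {fun j => rowD (min j n)} := by
  ext g
  simp only [Set.mem_singleton_iff]
  constructor
  · intro hg
    funext j
    rcases Nat.lt_or_ge j n with h | h
    · have h1 : g j ≤ rowD n := chain_mono hg j
      have h2 : (g j).card = j := by
        have := chain_card hg j (by rw [card_rowD]; omega)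
        exact this
      have h3 := eq_rowD_of_le_rowD h1
      rw [h2] at h3
      rw [h3, Nat.min_eq_left (by omega)]
    · rw [hg.2.1 j (by rw [card_rowD]; omega), Nat.min_eq_right h]
  · rintro rfl
    refine ⟨?_, ?_, ?_⟩
    · show rowD (min 0 n) = ⊥
      rw [Nat.min_eq_left (by omega)]
      ext c
      simp [mem_cells, mem_rowD, YoungDiagram.notMem_bot]
    · intro j hj
      rw [card_rowD] at hj
      show rowD (min j n) = rowD n
      rw [Nat.min_eq_right hj]
    · intro i hi
      rw [card_rowD] at hi
      show AddCell (rowD (min i n)) (rowD (min (i+1) n))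
      rw [Nat.min_eq_left (by omega), Nat.min_eq_left (by omega)]
      exact addCell_rowD i

theorem fc_rowD (n : ℕ) : Nat.card ↥(sytChains (rowD n)) = 1 := by
  rw [sytChains_rowD, Nat.card_coe_set_eq, Set.ncard_singleton]


theorem vac_even_card {k : ℕ} {lam mu : YoungDiagram} {f : ℕ → YoungDiagram}
    (hf : f ∈ vacTabs k lam mu) : ∀ i, i ≤ k → (f (2 * i)).card = mu.card := by
  obtain ⟨h0, hconst, hstep⟩ := hf
  have key : ∀ d i, i + d = k → (f (2 * i)).card = mu.card := by
    intro d
    induction d with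
    | zero =>
      intro i hi
      rw [hconst (2 * i) (by omega)]
    | succ d ih =>
      intro i hi
      have hs := hstep i (by omega)
      have h1 : (f (2 * i)).card = (f (2 * i + 1)).card + 1 := hs.1.2
      have h2 : (f (2 * i + 2)).card = (f (2 * i + 1)).card + 1 := hs.2.2
      have h3 : (f (2 * (i + 1))).card = mu.card := ih (i + 1) (by omega)
      rw [show 2 * (i + 1) = 2 * i + 2 by ring] at h3
      omega
  intro i hi
  exact key (k - i) i (by omega)

theorem vac_lam_card {k : ℕ} {lam mu : YoungDiagram} {f : ℕ → YoungDiagram}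
    (hf : f ∈ vacTabs k lam mu) : lam.card = mu.card := by
  have := vac_even_card hf 0 (by omega)
  rwa [Nat.mul_zero, hf.1] at this

theorem vac_card_le {k : ℕ} {lam mu : YoungDiagram} {f : ℕ → YoungDiagram}
    (hf : f ∈ vacTabs k lam mu) : ∀ j, (f j).card ≤ mu.card := by
  intro j
  rcases Nat.lt_or_ge j (2 * k) with h | h
  · rcases Nat.even_or_odd j with ⟨i, hi⟩ | ⟨i, hi⟩
    · rw [show j = 2 * i by omega]
      rw [vac_even_card hf i (by omega)]
    · have hs := hf.2.2 i (by omega)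
      have h1 : (f (2 * i)).card = (f (2 * i + 1)).card + 1 := hs.1.2
      have h2 := vac_even_card hf i (by omega)
      rw [show j = 2 * i + 1 by omega]
      omega
  · rw [hf.2.1 j h]

theorem cell_lt_card {μ : YoungDiagram} {i j : ℕ} (h : (i, j) ∈ μ) :
    i < μ.card ∧ j < μ.card := by
  constructor
  · have hsub : ∀ i' ∈ Finset.range (i + 1), (i', j) ∈ μ.cells := by
      intro i' hi'
      rw [Finset.mem_range] at hi'
      exact μ.up_left_mem (by omega) le_rfl h
    have := Finset.card_le_card_of_injOn (fun i' => (i', j)) hsub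
      (fun a _ b _ hab => (Prod.ext_iff.mp hab).1)
    rw [Finset.card_range] at this
    show i < μ.cells.card
    omega
  · have hsub : ∀ j' ∈ Finset.range (j + 1), (i, j') ∈ μ.cells := by
      intro j' hj'
      rw [Finset.mem_range] at hj'
      exact μ.up_left_mem le_rfl (by omega) h
    have := Finset.card_le_card_of_injOn (fun j' => (i, j')) hsub
      (fun a _ b _ hab => (Prod.ext_iff.mp hab).2)
    rw [Finset.card_range] at this
    show j < μ.cells.card
    omega

theorem card_le_finite (n : ℕ) : {μ : YoungDiagram | μ.card ≤ n}.Finite := by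
  apply Set.Finite.of_finite_image (f := YoungDiagram.cells)
  · apply ((Finset.range n ×ˢ Finset.range n).powerset : Finset _).finite_toSet.subset
    rintro s ⟨μ, hμ, rfl⟩
    rw [Finset.mem_coe, Finset.mem_powerset]
    intro c hc
    have hn' : μ.card ≤ n := hμ
    obtain ⟨h1, h2⟩ := cell_lt_card (show (c.1, c.2) ∈ μ from hc)
    rw [Finset.mem_product, Finset.mem_range, Finset.mem_range]
    exact ⟨by omega, by omega⟩
  · intro a _ b _ hab
    exact YoungDiagram.ext hab

theorem vacTabs_finite (k : ℕ) (lam mu : YoungDiagram) : (vacTabs k lam mu).Finite := by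
  apply Set.Finite.of_finite_image
    (f := fun f => (fun i : Fin (2 * k + 1) => f i.val))
  · apply Set.Finite.subset (Set.Finite.pi
      (fun _ : Fin (2 * k + 1) => card_le_finite mu.card))
    rintro h ⟨f, hf, rfl⟩
    intro i _
    exact vac_card_le hf i.val
  · intro f hf f' hf' he
    funext j
    rcases Nat.lt_or_ge j (2 * k + 1) with h | h
    · exact congrFun he ⟨j, h⟩
    · rw [hf.2.1 j (by omega), hf'.2.1 j (by omega)]

/-- The combined set of pairs (SYT chain, vacillating tableau). -/
def Gset (n k : ℕ) (mu : YoungDiagram) : Set ((ℕ → YoungDiagram) × (ℕ → YoungDiagram)) :=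
  {p | ∃ lam : YoungDiagram, lam.card = n ∧ p.1 ∈ sytChains lam ∧ p.2 ∈ vacTabs k lam mu}

theorem Gset_finite (n k : ℕ) (mu : YoungDiagram) : (Gset n k mu).Finite := by
  have h1 : ({lam : YoungDiagram | lam.card = n}).Finite :=
    (card_le_finite n).subset (fun lam h => le_of_eq h)
  have hS1 : (⋃ lam ∈ {lam : YoungDiagram | lam.card = n}, sytChains lam).Finite :=
    h1.biUnion (fun lam _ => sytChains_finite lam)
  have hS2 : (⋃ lam ∈ {lam : YoungDiagram | lam.card = n}, vacTabs k lam mu).Finite :=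
    h1.biUnion (fun lam _ => vacTabs_finite k lam mu)
  apply (hS1.prod hS2).subset
  rintro ⟨g, f⟩ ⟨lam, hcard, hg, hf⟩
  exact ⟨Set.mem_biUnion hcard hg, Set.mem_biUnion hcard hf⟩

instance (n k : ℕ) (mu : YoungDiagram) : Finite ↥(Gset n k mu) :=
  (Gset_finite n k mu).to_subtype


noncomputable def eTsig (ν : YoungDiagram) :
    (Σ l : {l : YoungDiagram // AddCell ν l}, ↥(sytChains l.val)) ≃ ↥(Ttot ν) := by
  refine Equiv.ofBijective (fun x => ⟨x.2.val, x.1.val, x.1.prop, x.2.prop⟩) ⟨?_, ?_⟩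
  · rintro ⟨⟨l, hl⟩, ⟨g, hg⟩⟩ ⟨⟨l2, hl2⟩, ⟨g2, hg2⟩⟩ he
    have he' : g = g2 := congrArg Subtype.val he
    have hgm : g ∈ sytChains l := hg
    have hgm2 : g2 ∈ sytChains l2 := hg2
    have hll : l = l2 := by
      rw [← hgm.2.1 l.card le_rfl, ← hgm2.2.1 l2.card le_rfl, he',
        show l.card = l2.card by rw [hl.2, hl2.2]]
    subst hll he'
    rfl
  · rintro ⟨g, l, hl, hg⟩
    exact ⟨⟨⟨l, hl⟩, ⟨g, hg⟩⟩, rfl⟩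

theorem sum_covers (ν : YoungDiagram) [Fintype {l : YoungDiagram // AddCell ν l}] :
    ∑ l : {l : YoungDiagram // AddCell ν l}, Nat.card ↥(sytChains l.val) =
      Nat.card ↥(Ttot ν) := by
  rw [← natCard_sigma, Nat.card_congr (eTsig ν)]

noncomputable def eG0 (n : ℕ) (mu : YoungDiagram) (hmu : mu.card = n) :
    ↥(sytChains mu) ≃ ↥(Gset n 0 mu) := by
  refine Equiv.ofBijective (fun g => ⟨(g.val, fun _ => mu), mu, hmu, g.prop,
    rfl, fun j _ => rfl, fun i hi => absurd hi (Nat.not_lt_zero i)⟩) ⟨?_, ?_⟩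
  · intro a b h
    exact Subtype.ext (congrArg (fun p : ↥(Gset n 0 mu) => p.val.1) h)
  · rintro ⟨⟨g, f⟩, lam, hlam, hg, hf⟩
    have hconst : ∀ j, f j = mu := fun j => hf.2.1 j (by omega)
    have hlm : lam = mu := by
      have hf1 : f 0 = lam := hf.1
      rw [← hf1, hconst 0]
    subst hlm
    refine ⟨⟨g, hg⟩, ?_⟩
    apply Subtype.ext
    show (g, fun _ => lam) = (g, f)
    refine Prod.ext rfl ?_
    funext j
    exact (hconst j).symm

/-- Extend a vacillating tableau by one final down-up step. -/
def stepF (k : ℕ) (mu ρ : YoungDiagram)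
    (p : (ℕ → YoungDiagram) × (ℕ → YoungDiagram)) :
    (ℕ → YoungDiagram) × (ℕ → YoungDiagram) :=
  (p.1, fun j => if j ≤ 2 * k then p.2 j else if j = 2 * k + 1 then ρ else mu)

theorem stepF_mem {n k : ℕ} {mu ρ l : YoungDiagram}
    {p : (ℕ → YoungDiagram) × (ℕ → YoungDiagram)}
    (hρmu : AddCell ρ mu) (hρl : AddCell ρ l) (hp : p ∈ Gset n k l) :
    stepF k mu ρ p ∈ Gset n (k + 1) mu := by
  obtain ⟨lam, hlam, hg, hf⟩ := hp
  refine ⟨lam, hlam, hg, ?_, ?_, ?_⟩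
  · show (if 0 ≤ 2 * k then p.2 0 else if 0 = 2 * k + 1 then ρ else mu) = lam
    rw [if_pos (by omega)]
    exact hf.1
  · intro j hj
    show (if j ≤ 2 * k then p.2 j else if j = 2 * k + 1 then ρ else mu) = mu
    rw [if_neg (by omega), if_neg (by omega)]
  · intro i hi
    rcases Nat.lt_or_ge i k with h | h
    · have e0 : (stepF k mu ρ p).2 (2 * i) = p.2 (2 * i) := by
        show (if 2 * i ≤ 2 * k then _ else _) = _
        rw [if_pos (by omega)]
      have e1 : (stepF k mu ρ p).2 (2 * i + 1) = p.2 (2 * i + 1) := by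
        show (if 2 * i + 1 ≤ 2 * k then _ else _) = _
        rw [if_pos (by omega)]
      have e2 : (stepF k mu ρ p).2 (2 * i + 2) = p.2 (2 * i + 2) := by
        show (if 2 * i + 2 ≤ 2 * k then _ else _) = _
        rw [if_pos (by omega)]
      show AddCell ((stepF k mu ρ p).2 (2 * i + 1)) ((stepF k mu ρ p).2 (2 * i)) ∧
        AddCell ((stepF k mu ρ p).2 (2 * i + 1)) ((stepF k mu ρ p).2 (2 * i + 2))
      rw [e0, e1, e2]
      exact hf.2.2 i h
    · have hik : i = k := by omega
      have e0 : (stepF k mu ρ p).2 (2 * i) = l := by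
        show (if 2 * i ≤ 2 * k then p.2 (2 * i) else _) = _
        rw [if_pos (by omega), show 2 * i = 2 * k by omega]
        exact hf.2.1 (2 * k) le_rfl
      have e1 : (stepF k mu ρ p).2 (2 * i + 1) = ρ := by
        show (if 2 * i + 1 ≤ 2 * k then p.2 (2 * i + 1) else if 2 * i + 1 = 2 * k + 1 then ρ else mu) = ρ
        rw [if_neg (by omega), if_pos (by omega)]
      have e2 : (stepF k mu ρ p).2 (2 * i + 2) = mu := by
        show (if 2 * i + 2 ≤ 2 * k then p.2 (2 * i + 2) else if 2 * i + 2 = 2 * k + 1 then ρ else mu) = mu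
        rw [if_neg (by omega), if_neg (by omega)]
      show AddCell ((stepF k mu ρ p).2 (2 * i + 1)) ((stepF k mu ρ p).2 (2 * i)) ∧
        AddCell ((stepF k mu ρ p).2 (2 * i + 1)) ((stepF k mu ρ p).2 (2 * i + 2))
      rw [e0, e1, e2]
      exact ⟨hρl, hρmu⟩

noncomputable def eGstep (n k : ℕ) (mu : YoungDiagram) :
    (Σ ρ : {ρ : YoungDiagram // AddCell ρ mu},
      Σ l : {l : YoungDiagram // AddCell ρ.val l}, ↥(Gset n k l.val)) ≃
      ↥(Gset n (k + 1) mu) := by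
  refine Equiv.ofBijective (fun x =>
    ⟨stepF k mu x.1.val x.2.2.val, stepF_mem x.1.prop x.2.1.prop x.2.2.prop⟩) ⟨?_, ?_⟩
  · rintro ⟨⟨ρ, hρ⟩, ⟨l, hl⟩, ⟨⟨g, f0⟩, hp⟩⟩ ⟨⟨ρ2, hρ2⟩, ⟨l2, hl2⟩, ⟨⟨g2, f02⟩, hp2⟩⟩ he
    have hv := congrArg Subtype.val he
    simp only [stepF] at hv
    have hg : g = g2 := (Prod.ext_iff.mp hv).1
    have hfext := (Prod.ext_iff.mp hv).2
    obtain ⟨lam, hlam, hgm, hf0⟩ := hp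
    obtain ⟨lam2, hlam2, hgm2, hf02⟩ := hp2
    have hf0' : f0 ∈ vacTabs k lam l := hf0
    have hf02' : f02 ∈ vacTabs k lam2 l2 := hf02
    have hρρ : ρ = ρ2 := by
      have h5 := congrFun hfext (2 * k + 1)
      dsimp only at h5
      rwa [if_neg (by omega), if_pos rfl, if_neg (by omega), if_pos rfl] at h5
    have hff : f0 = f02 := by
      funext j
      rcases Nat.lt_or_ge j (2 * k + 1) with h | h
      · have h5 := congrFun hfext j
        dsimp only at h5
        rwa [if_pos (by omega), if_pos (by omega)] at h5
      · rw [hf0'.2.1 j (by omega), hf02'.2.1 j (by omega)]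
        have h5 := congrFun hfext (2 * k)
        dsimp only at h5
        rw [if_pos (by omega), if_pos (by omega)] at h5
        rw [← hf0'.2.1 (2 * k) le_rfl, ← hf02'.2.1 (2 * k) le_rfl]
        exact h5
    have hll : l = l2 := by
      rw [← hf0'.2.1 (2 * k) le_rfl, ← hf02'.2.1 (2 * k) le_rfl, hff]
    subst hρρ hll hg hff
    rfl
  · rintro ⟨⟨g, f⟩, lam, hlam, hg, hf⟩
    have hstep := hf.2.2 k (by omega)
    have hmu2 : f (2 * k + 2) = mu := hf.2.1 (2 * k + 2) (by omega)
    have hρmu : AddCell (f (2 * k + 1)) mu := by rw [← hmu2]; exact hstep.2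
    have hρl : AddCell (f (2 * k + 1)) (f (2 * k)) := hstep.1
    have hf0 : (fun j => if j ≤ 2 * k then f j else f (2 * k)) ∈
        vacTabs k lam (f (2 * k)) := by
      refine ⟨?_, ?_, ?_⟩
      · show (if 0 ≤ 2 * k then f 0 else _) = lam
        rw [if_pos (by omega)]
        exact hf.1
      · intro j hj
        show (if j ≤ 2 * k then f j else f (2 * k)) = f (2 * k)
        rcases Nat.lt_or_ge (2 * k) j with h | h
        · rw [if_neg (by omega)]
        · rw [if_pos (by omega), show j = 2 * k by omega]
      · intro i hi
        have e0 : (if 2 * i ≤ 2 * k then f (2 * i) else f (2 * k)) = f (2 * i) :=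
          if_pos (by omega)
        have e1 : (if 2 * i + 1 ≤ 2 * k then f (2 * i + 1) else f (2 * k)) = f (2 * i + 1) :=
          if_pos (by omega)
        have e2 : (if 2 * i + 2 ≤ 2 * k then f (2 * i + 2) else f (2 * k)) = f (2 * i + 2) :=
          if_pos (by omega)
        show AddCell (if 2 * i + 1 ≤ 2 * k then f (2 * i + 1) else f (2 * k))
            (if 2 * i ≤ 2 * k then f (2 * i) else f (2 * k)) ∧
          AddCell (if 2 * i + 1 ≤ 2 * k then f (2 * i + 1) else f (2 * k))
            (if 2 * i + 2 ≤ 2 * k then f (2 * i + 2) else f (2 * k))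
        rw [e0, e1, e2]
        exact hf.2.2 i (by omega)
    refine ⟨⟨⟨f (2 * k + 1), hρmu⟩, ⟨f (2 * k), hρl⟩,
      ⟨(g, fun j => if j ≤ 2 * k then f j else f (2 * k)), lam, hlam, hg, hf0⟩⟩, ?_⟩
    apply Subtype.ext
    refine Prod.ext rfl ?_
    funext j
    show (if j ≤ 2 * k then (if j ≤ 2 * k then f j else f (2 * k)) else
      if j = 2 * k + 1 then f (2 * k + 1) else mu) = f j
    rcases Nat.lt_or_ge (2 * k) j with h | h
    · rw [if_neg (by omega)]
      rcases Nat.lt_or_ge (2 * k + 1) j with h2 | h2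
      · rw [if_neg (by omega)]
        exact (hf.2.1 j (by omega)).symm
      · rw [if_pos (by omega)]
        rw [show j = 2 * k + 1 by omega]
    · rw [if_pos (by omega), if_pos (by omega)]

theorem cardG (n : ℕ) (hn : 1 ≤ n) : ∀ (k : ℕ) (mu : YoungDiagram), mu.card = n →
    Nat.card ↥(Gset n k mu) = n ^ k * Nat.card ↥(sytChains mu) := by
  intro k
  induction k with
  | zero =>
    intro mu hmu
    rw [← Nat.card_congr (eG0 n mu hmu)]
    simp
  | succ k ih =>
    intro mu hmu
    letI : Fintype {ρ : YoungDiagram // AddCell ρ mu} := Fintype.ofFinite _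
    rw [← Nat.card_congr (eGstep n k mu), natCard_sigma]
    have hinner : ∀ ρ : {ρ : YoungDiagram // AddCell ρ mu},
        Nat.card (Σ l : {l : YoungDiagram // AddCell ρ.val l}, ↥(Gset n k l.val)) =
          n ^ k * (n * Nat.card ↥(sytChains ρ.val)) := by
      intro ρ
      letI : Fintype {l : YoungDiagram // AddCell ρ.val l} := Fintype.ofFinite _
      rw [natCard_sigma]
      have hl : ∀ l : {l : YoungDiagram // AddCell ρ.val l},
          Nat.card ↥(Gset n k l.val) = n ^ k * Nat.card ↥(sytChains l.val) := by
        intro l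
        apply ih
        have h1 := ρ.prop.2
        have h2 := l.prop.2
        omega
      rw [Finset.sum_congr rfl (fun l _ => hl l), ← Finset.mul_sum, sum_covers ρ.val,
        cardTtot (n - 1) ρ.val (by have := ρ.prop.2; omega), show n - 1 + 1 = n by omega]
    rw [Finset.sum_congr rfl (fun ρ _ => hinner ρ), ← Finset.mul_sum, ← Finset.mul_sum,
      sum_branch mu (by omega)]
    ring

end VacAux

theorem stmt11 (n k : ℕ) (hn : 1 ≤ n) :
    {p : (ℕ → YoungDiagram) × (ℕ → YoungDiagram) |
        ∃ lam : YoungDiagram, lam.card = n ∧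
          p.1 ∈ sytChains lam ∧ p.2 ∈ vacTabs k lam (rowD n)}.ncard =
      Nat.card (Fin k → Fin n) := by
  have h1 : {p : (ℕ → YoungDiagram) × (ℕ → YoungDiagram) |
      ∃ lam : YoungDiagram, lam.card = n ∧
        p.1 ∈ sytChains lam ∧ p.2 ∈ vacTabs k lam (rowD n)} = VacAux.Gset n k (rowD n) := rfl
  rw [h1, ← Nat.card_coe_set_eq,
    VacAux.cardG n hn k (rowD n) (VacAux.card_rowD n), VacAux.fc_rowD]
  simp [Nat.card_eq_fintype_card]
end

section
/- For every nonnegative integer k and positive integer n, the number of sequences (i₁,…,i_k) ∈ {1,…,n}^k equals the number of ways to place k crosses, one in each of k rows of lengths n, n+1, …, n+k−1 respectively (row j having length n+j−1), with at most one cross per column, where columns are aligned on the left. -/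
open YoungDiagram

def FS (k n : ℕ) : Finset (Fin k → ℕ) :=
  (Fintype.piFinset fun j : Fin k => Finset.Icc 1 (n + (j : ℕ))).filter Function.Injective

lemma FS_card (k n : ℕ) : (FS k n).card = n ^ k := by
  induction k with
  | zero =>
    rw [pow_zero]
    rw [Finset.card_eq_one]
    exact ⟨fun j => j.elim0, by
      ext c
      simp [FS, Function.Injective, Subsingleton.elim c _, funext_iff, Fin.forall_fin_zero_pi]⟩
  | succ k ih =>
    have hmap : ∀ c ∈ FS (k + 1) n, (fun j : Fin k => c j.castSucc) ∈ FS k n := by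
      intro c hc
      simp only [FS, Finset.mem_filter, Fintype.mem_piFinset] at hc ⊢
      refine ⟨fun j => by simpa using hc.1 j.castSucc, fun i j h => ?_⟩
      exact Fin.castSucc_injective k (hc.2 h)
    rw [Finset.card_eq_sum_card_fiberwise hmap]
    have hfib : ∀ c' ∈ FS k n,
        ((FS (k + 1) n).filter fun c => (fun j : Fin k => c j.castSucc) = c').card = n := by
      intro c' hc'
      simp only [FS, Finset.mem_filter, Fintype.mem_piFinset] at hc'
      have himg : (Finset.univ.image c') ⊆ Finset.Icc 1 (n + k) := by
        intro x hx
        simp only [Finset.mem_image] at hx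
        obtain ⟨j, -, rfl⟩ := hx
        have := hc'.1 j
        simp only [Finset.mem_Icc] at this ⊢
        exact ⟨this.1, this.2.trans (by omega)⟩
      have hcard : (Finset.Icc 1 (n + k) \ Finset.univ.image c').card = n := by
        rw [Finset.card_sdiff_of_subset himg, Finset.card_image_of_injective _ hc'.2]
        simp [Nat.card_Icc]
      have hbij : ((FS (k + 1) n).filter fun c => (fun j : Fin k => c j.castSucc) = c').card
          = (Finset.Icc 1 (n + k) \ Finset.univ.image c').card := by
        apply Finset.card_bij (fun c _ => c (Fin.last k))
        · intro c hcm
          simp only [Finset.mem_filter, FS, Fintype.mem_piFinset] at hcm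
          obtain ⟨⟨h1, h2⟩, h3⟩ := hcm
          simp only [Finset.mem_sdiff, Finset.mem_image, not_exists]
          constructor
          · have := h1 (Fin.last k); simpa using this
          · intro j
            intro hj
            have : c j.castSucc = c (Fin.last k) := by rw [← hj.2, ← congrFun h3 j]
            have := h2 this
            exact absurd this (by simp [Fin.ext_iff]; omega)
        · intro a ha b hb hab
          simp only [Finset.mem_filter] at ha hb
          funext j
          refine Fin.lastCases ?_ ?_ j
          · exact hab
          · intro i
            rw [congrFun ha.2 i, congrFun hb.2 i]
        · intro x hx
          simp only [Finset.mem_sdiff, Finset.mem_Icc, Finset.mem_image, not_exists] at hx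
          refine ⟨Fin.lastCases x c', ?_, by simp⟩
          simp only [Finset.mem_filter, FS, Fintype.mem_piFinset]
          refine ⟨⟨?_, ?_⟩, ?_⟩
          · intro j
            refine Fin.lastCases ?_ ?_ j
            · simp only [Fin.lastCases_last, Finset.mem_Icc, Fin.val_last]
              exact hx.1
            · intro i
              simp only [Fin.lastCases_castSucc, Fin.coe_castSucc]
              exact hc'.1 i
          · intro i j h
            rcases Fin.eq_castSucc_or_eq_last i with ⟨i', rfl⟩ | rfl <;>
              rcases Fin.eq_castSucc_or_eq_last j with ⟨j', rfl⟩ | rfl <;>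
              simp only [Fin.lastCases_castSucc, Fin.lastCases_last] at h ⊢
            · exact congrArg Fin.castSucc (hc'.2 h)
            · exact absurd h (fun h => hx.2 i' ⟨Finset.mem_univ _, h⟩)
            · exact absurd h.symm (fun h => hx.2 j' ⟨Finset.mem_univ _, h⟩)
          · funext j; simp
      rw [hbij, hcard]
    rw [Finset.sum_congr rfl hfib, Finset.sum_const, smul_eq_mul, ih]
    ring

theorem stmt14 (k n : ℕ) (hn : 1 ≤ n) :
    Nat.card (Fin k → Fin n) =
      {c : Fin k → ℕ | Function.Injective c ∧
        ∀ j : Fin k, 1 ≤ c j ∧ c j ≤ n + (j : ℕ)}.ncard := by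
  have hset : {c : Fin k → ℕ | Function.Injective c ∧
      ∀ j : Fin k, 1 ≤ c j ∧ c j ≤ n + (j : ℕ)} = ↑(FS k n) := by
    ext c
    simp [FS, Fintype.mem_piFinset, and_comm]
  rw [hset, Set.ncard_coe_finset, FS_card]
  simp [Nat.card_eq_fintype_card]
end
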